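/- Let Γ be a good pointclass. If Γ contains a Hamel basis, then Γ contains a Vitali set. Explicitly, if B ∈ Γ is a Hamel basis, fix a representation 1 = Σ_{k=1}^n q_k z_k with nonzero rational coefficients and distinct z_k ∈ B; then V = span_ℚ(B ∖ {z_1}) is a Vitali set and V ∈ Γ. -/

import Mathlib

open Set

open Classical in
/-- The characteristic function of a set, viewed as a point of the Cantor space `α → Bool`. -/
noncomputable def chi {α : Type} (s : Set α) : α → Bool :=
  fun a => if a ∈ s then true else false
/-- A *good pointclass*: a collection of subsets of Polish spaces containing all clopen
sets and closed under countable intersections, countable unions, finite products,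
continuous images, and continuous preimages. -/
structure GoodPointclass : Type 1 where
  mem : ∀ (X : Type) [TopologicalSpace X], Set (Set X)
  clopen_mem : ∀ (X : Type) [TopologicalSpace X] [PolishSpace X] (s : Set X),
    IsClopen s → s ∈ mem X
  iInter_mem : ∀ (X : Type) [TopologicalSpace X] [PolishSpace X] (s : ℕ → Set X),
    (∀ n, s n ∈ mem X) → (⋂ n, s n) ∈ mem X
  iUnion_mem : ∀ (X : Type) [TopologicalSpace X] [PolishSpace X] (s : ℕ → Set X),
    (∀ n, s n ∈ mem X) → (⋃ n, s n) ∈ mem X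
  prod_mem : ∀ (X Y : Type) [TopologicalSpace X] [PolishSpace X]
    [TopologicalSpace Y] [PolishSpace Y] (s : Set X) (t : Set Y),
    s ∈ mem X → t ∈ mem Y → s ×ˢ t ∈ mem (X × Y)
  image_mem : ∀ (X Y : Type) [TopologicalSpace X] [PolishSpace X]
    [TopologicalSpace Y] [PolishSpace Y] (f : X → Y) (s : Set X),
    Continuous f → s ∈ mem X → f '' s ∈ mem Y
  preimage_mem : ∀ (X Y : Type) [TopologicalSpace X] [PolishSpace X]
    [TopologicalSpace Y] [PolishSpace Y] (f : X → Y) (t : Set Y),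
    Continuous f → t ∈ mem Y → f ⁻¹' t ∈ mem X
/-- A Vitali set: `V ⊆ ℝ` such that every real differs from a unique element
of `V` by a rational. -/
def IsVitali (V : Set ℝ) : Prop :=
  ∀ x : ℝ, ∃! v, v ∈ V ∧ ∃ q : ℚ, x - v = (q : ℝ)
/-- A Hamel basis: a basis of `ℝ` as a vector space over `ℚ`. -/
def IsHamelBasis (B : Set ℝ) : Prop :=
  LinearIndependent ℚ ((↑) : B → ℝ) ∧ Submodule.span ℚ B = ⊤

lemma aux_open_mem (Γ : GoodPointclass) (U : Set ℝ) (hU : IsOpen U) : U ∈ Γ.mem ℝ := by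
  haveI : PolishSpace ↥U := hU.polishSpace
  have h := Γ.image_mem ↥U ℝ Subtype.val univ continuous_subtype_val
    (Γ.clopen_mem ↥U univ isClopen_univ)
  simpa [Set.image_univ, Subtype.range_coe] using h

lemma aux_inter_mem (Γ : GoodPointclass) (s t : Set ℝ) (hs : s ∈ Γ.mem ℝ) (ht : t ∈ Γ.mem ℝ) :
    s ∩ t ∈ Γ.mem ℝ := by
  have h := Γ.iInter_mem ℝ (fun n => if n = 0 then s else t)
    (fun n => by split <;> assumption)
  have he : (⋂ n : ℕ, (if n = 0 then s else t)) = s ∩ t := by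
    ext x
    simp only [Set.mem_iInter, Set.mem_inter_iff]
    constructor
    · intro h; exact ⟨by simpa using h 0, by simpa using h 1⟩
    · rintro ⟨h1, h2⟩ n; split <;> assumption
  rwa [he] at h

lemma aux_span_mem (Γ : GoodPointclass) (B' : Set ℝ) (hB' : B' ∈ Γ.mem ℝ) :
    (↑(Submodule.span ℚ B') : Set ℝ) ∈ Γ.mem ℝ := by
  obtain ⟨e, he⟩ := exists_surjective_nat (Σ m : ℕ, (Fin m → ℚ))
  set F : (Σ m : ℕ, (Fin m → ℚ)) → Set ℝ := fun i =>
    (fun b : Fin i.1 → ℝ => ∑ j, (i.2 j : ℝ) * b j) '' {b | ∀ j, b j ∈ B'} with hF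
  have hFmem : ∀ i, F i ∈ Γ.mem ℝ := by
    rintro ⟨m, c⟩
    have hS : {b : Fin m → ℝ | ∀ j, b j ∈ B'}
        = ⋂ (j : ℕ), (if h : j < m then (fun b : Fin m → ℝ => b ⟨j, h⟩) ⁻¹' B' else univ) := by
      ext b
      simp only [Set.mem_iInter, Set.mem_setOf_eq]
      constructor
      · intro h j
        split
        · exact h _
        · trivial
      · intro h j
        have := h j.1
        rw [dif_pos j.2] at this
        simpa using this
    have hSmem : {b : Fin m → ℝ | ∀ j, b j ∈ B'} ∈ Γ.mem (Fin m → ℝ) := by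
      rw [hS]
      refine Γ.iInter_mem _ _ fun j => ?_
      split
      · exact Γ.preimage_mem _ _ _ _ (continuous_apply _) hB'
      · exact Γ.clopen_mem _ _ isClopen_univ
    exact Γ.image_mem _ _ _ _
      (continuous_finset_sum _ fun j _ => (continuous_const.mul (continuous_apply j))) hSmem
  have heq : (↑(Submodule.span ℚ B') : Set ℝ) = ⋃ k, F (e k) := by
    ext x
    simp only [Set.mem_iUnion, SetLike.mem_coe]
    constructor
    · intro hx
      obtain ⟨m, f, g, hfg⟩ := Submodule.mem_span_set'.mp hx
      obtain ⟨k, hk⟩ := he ⟨m, f⟩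
      refine ⟨k, ?_⟩
      rw [hk]
      exact ⟨fun j => (g j : ℝ), fun j => (g j).2, by simpa [Rat.smul_def] using hfg⟩
    · rintro ⟨k, b, hb, rfl⟩
      exact Submodule.sum_mem _ fun j _ => by
        rw [← Rat.smul_def]
        exact Submodule.smul_mem _ _ (Submodule.subset_span (hb j))
  rw [heq]
  exact Γ.iUnion_mem _ _ fun k => hFmem _

lemma aux_vitali (B : Set ℝ) (hB : IsHamelBasis B)
    (n : ℕ) (z : Fin (n + 1) → ℝ) (hzinj : Function.Injective z)
    (hzB : ∀ k, z k ∈ B) (q : Fin (n + 1) → ℚ) (hq : ∀ k, q k ≠ 0)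
    (hrep : ∑ k, (q k : ℝ) * z k = 1) :
    IsVitali (↑(Submodule.span ℚ (B \ {z 0})) : Set ℝ) := by
  set V := Submodule.span ℚ (B \ {z 0}) with hV
  -- z 0 ∉ V
  have hz0 : z 0 ∉ V := by
    have himg : (Subtype.val '' {b : ↥B | (b : ℝ) ≠ z 0}) = B \ {z 0} := by
      ext y
      constructor
      · rintro ⟨⟨y, hy⟩, hne, rfl⟩; exact ⟨hy, hne⟩
      · rintro ⟨hy, hne⟩; exact ⟨⟨y, hy⟩, hne, rfl⟩
    have := hB.1.notMem_span_image (s := {b : ↥B | (b : ℝ) ≠ z 0})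
      (x := ⟨z 0, hzB 0⟩) (by simp)
    rwa [himg] at this
  -- w ∈ V with 1 = q0 * z0 + w
  set w : ℝ := ∑ k : Fin n, (q k.succ : ℝ) * z k.succ with hw
  have hwV : w ∈ V := Submodule.sum_mem _ fun k _ => by
    rw [← Rat.smul_def]
    refine Submodule.smul_mem _ _ (Submodule.subset_span ⟨hzB _, ?_⟩)
    simp only [Set.mem_singleton_iff]
    intro h
    exact (Fin.succ_ne_zero k) (hzinj h)
  have hsplit : (q 0 : ℝ) * z 0 + w = 1 := by
    rw [← hrep, Fin.sum_univ_succ]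
  have hq0 : (q 0 : ℝ) ≠ 0 := by exact_mod_cast hq 0
  -- 1 ∉ V
  have h1 : (1 : ℝ) ∉ V := by
    intro h1V
    apply hz0
    have : z 0 = ((q 0)⁻¹ : ℚ) • ((1 : ℝ) - w) := by
      rw [Rat.smul_def]
      push_cast
      field_simp
      linarith [hsplit]
    rw [this]
    exact Submodule.smul_mem _ _ (Submodule.sub_mem _ h1V hwV)
  intro x
  -- existence
  have hx : x ∈ Submodule.span ℚ (insert (z 0) (B \ {z 0})) := by
    rw [Set.insert_diff_singleton, Set.insert_eq_of_mem (hzB 0), hB.2]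
    trivial
  obtain ⟨a, v, hvV, hxav⟩ := Submodule.mem_span_insert.mp hx
  refine ⟨v - (a / q 0) • w, ⟨Submodule.sub_mem _ hvV (Submodule.smul_mem _ _ hwV), a / q 0, ?_⟩, ?_⟩
  · rw [hxav, Rat.smul_def, Rat.smul_def]
    push_cast
    field_simp
    linear_combination (a : ℝ) * hsplit
  · -- uniqueness
    rintro v' ⟨hv'V, r', hr'⟩
    have hvsub : v - (a / q 0) • w ∈ (V : Set ℝ) :=
      Submodule.sub_mem _ hvV (Submodule.smul_mem _ _ hwV)
    have hr : x - (v - (a / q 0) • w) = ((a / q 0 : ℚ) : ℝ) := by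
      rw [hxav, Rat.smul_def, Rat.smul_def]
      push_cast
      field_simp
      linear_combination (a : ℝ) * hsplit
    -- v' - (v - ...) = rational, both in V
    by_contra hne
    have hdiff : v' - (v - (a / q 0) • w) = ((a / q 0 - r' : ℚ) : ℝ) := by
      push_cast at hr hr' ⊢
      linarith [hr, hr']
    have hrq : (a / q 0 - r' : ℚ) ≠ 0 := by
      intro h0
      apply hne
      have : v' - (v - (a / q 0) • w) = 0 := by rw [hdiff, h0]; simp
      linarith [this]
    apply h1
    have : (1 : ℝ) = ((a / q 0 - r')⁻¹ : ℚ) • (v' - (v - (a / q 0) • w)) := by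
      rw [Rat.smul_def, hdiff]
      rw [← Rat.cast_mul, inv_mul_cancel₀ hrq, Rat.cast_one]
    rw [hV, this]
    exact Submodule.smul_mem _ _ (Submodule.sub_mem _ hv'V hvsub)

theorem hamel_basis_gives_vitali_set (Γ : GoodPointclass)
    (B : Set ℝ) (hB : IsHamelBasis B) (hBΓ : B ∈ Γ.mem ℝ)
    (n : ℕ) (z : Fin (n + 1) → ℝ) (hzinj : Function.Injective z)
    (hzB : ∀ k, z k ∈ B) (q : Fin (n + 1) → ℚ) (hq : ∀ k, q k ≠ 0)
    (hrep : ∑ k, (q k : ℝ) * z k = 1) :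
    IsVitali (↑(Submodule.span ℚ (B \ {z 0})) : Set ℝ) ∧
      (↑(Submodule.span ℚ (B \ {z 0})) : Set ℝ) ∈ Γ.mem ℝ := by
  constructor
  · exact aux_vitali B hB n z hzinj hzB q hq hrep
  · have hdiff : B \ {z 0} ∈ Γ.mem ℝ := by
      rw [Set.diff_eq]
      exact aux_inter_mem Γ B _ hBΓ (aux_open_mem Γ _ isClosed_singleton.isOpen_compl)
    exact aux_span_mem Γ _ hdiff
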